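/- If γ_1 = 1 and γ_2 < ∞, then lim_{n→∞} Q_n/n = 2Q_0/γ_2. (Note that f_0 > 0 together with γ_1 = 1 forces γ_2 > 0.) -/

import Mathlib

open Filter Topology
open scoped ENNReal

lemma takacs_tsum_tail (w G : ℕ → ℝ≥0∞) :
    ∑' k, w k * ∑' j, G (j + k + 1) = ∑' n, (∑ i ∈ Finset.range n, w i) * G n := by
  have h1 : ∀ k : ℕ, w k * ∑' j, G (j + k + 1)
      = ∑' n, (if k + 1 ≤ n then w k * G n else 0) := by
    intro k
    rw [← ENNReal.tsum_mul_left]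
    have hinj : Function.Injective (fun j : ℕ => j + k + 1) := by
      intro a b h; simpa using h
    have h2 := hinj.tsum_eq (f := fun n => if k + 1 ≤ n then w k * G n else 0) ?_
    · rw [← h2]
      congr 1; funext j
      rw [if_pos (by omega)]
    · intro x hx
      have hkx : k + 1 ≤ x := by
        by_contra h
        simp only [Function.mem_support, if_neg h, ne_eq, not_true_eq_false] at hx
      exact ⟨x - k - 1, by show x - k - 1 + k + 1 = x; omega⟩
  simp_rw [h1]
  rw [ENNReal.tsum_comm]
  congr 1; funext n
  rw [tsum_eq_sum (s := Finset.range n) (f := fun k => if k + 1 ≤ n then w k * G n else 0)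
    (fun k hk => if_neg (by simp at hk ⊢; omega))]
  rw [Finset.sum_congr rfl (fun k hk => if_pos (by simp at hk; omega)), Finset.sum_mul]

set_option maxHeartbeats 2000000 in
/-- Theorem of Takács: if `γ₁ = Σ_{j≥1} j f_j = 1` and `γ₂ = Σ_{j≥2} j(j-1) f_j < ∞`, then
`Q_n / n → 2 Q_0 / γ₂`. -/
theorem takacs_gamma1_eq_one
    (f Q : ℕ → ℝ)
    (hf0 : 0 < f 0) (hf : ∀ i, 0 ≤ f i)
    (hfsum : ∑' i : ℕ, f i = 1)
    (hQ0 : 0 < Q 0)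
    (hrec : ∀ n, Q n = ∑ i ∈ Finset.range (n + 1), f i * Q (n - i + 1))
    (hγ1 : ∑' j : ℕ, ENNReal.ofReal ((j : ℝ) * f j) = 1)
    (hγ2 : ∑' j : ℕ, ENNReal.ofReal ((j.descFactorial 2 : ℝ) * f j) < ⊤) :
    Tendsto (fun n => Q n / n) atTop
      (𝓝 (2 * Q 0 / (∑' j : ℕ, ENNReal.ofReal ((j.descFactorial 2 : ℝ) * f j)).toReal)) := by
  -- ## Summability of f
  have hsf : Summable f := by
    by_contra h
    rw [tsum_eq_zero_of_not_summable h] at hfsum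
    norm_num at hfsum
  have hsf' : ∀ k : ℕ, Summable fun j => f (j + k) := fun k => (summable_nat_add_iff k).2 hsf
  -- ## tail sums m
  set m : ℕ → ℝ := fun k => ∑' j, f (j + (k + 1)) with hm_def
  have hm_nonneg : ∀ k, 0 ≤ m k := fun k => tsum_nonneg fun j => hf _
  have hm_shift : ∀ k, m k = f (k + 1) + m (k + 1) := by
    intro k
    have h := Summable.sum_add_tsum_nat_add (f := fun j => f (j + (k + 1))) 1 (hsf' (k + 1))
    simp only [Finset.sum_range_one] at h
    rw [hm_def]
    simp only [zero_add] at h ⊢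
    rw [← h]
    exact congrArg _ (tsum_congr fun j => by congr 1; omega)
  have hm0 : f 0 + m 0 = 1 := by
    have h := Summable.sum_add_tsum_nat_add (f := f) 1 hsf
    simp only [Finset.sum_range_one, hfsum] at h
    rw [hm_def]; simpa using h
  -- ## ENNReal versions
  set F1 : ℕ → ℝ≥0∞ := fun j => ENNReal.ofReal (f j) with hF1_def
  have hofm : ∀ k, ENNReal.ofReal (m k) = ∑' j, F1 (j + k + 1) := by
    intro k
    rw [hm_def, ENNReal.ofReal_tsum_of_nonneg (fun j => hf _) (hsf' (k + 1))]
    exact tsum_congr fun j => rfl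
  have hγ1' : (∑' n : ℕ, (n : ℝ≥0∞) * F1 n) = 1 := by
    rw [← hγ1]
    congr 1; funext n
    rw [ENNReal.ofReal_mul (by positivity), ENNReal.ofReal_natCast]
  have hmsum1 : ∑' k, ENNReal.ofReal (m k) = 1 := by
    simp_rw [hofm]
    have h := takacs_tsum_tail (fun _ => 1) F1
    simpa using h.trans (by simpa using hγ1')
  have hmsum : Summable m := by
    have h := ENNReal.summable_toReal (by rw [hmsum1]; exact ENNReal.one_ne_top)
    refine h.congr fun k => ?_
    exact ENNReal.toReal_ofReal (hm_nonneg k)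
  have hmtot : ∑' k, m k = 1 := by
    have h := ENNReal.ofReal_tsum_of_nonneg hm_nonneg hmsum
    rw [hmsum1] at h
    exact ENNReal.ofReal_eq_one.mp h
  have hsm' : ∀ k : ℕ, Summable fun j => m (j + k) := fun k => (summable_nat_add_iff k).2 hmsum
  -- ## tail sums b
  set b : ℕ → ℝ := fun k => ∑' j, m (j + (k + 1)) with hb_def
  have hb_nonneg : ∀ k, 0 ≤ b k := fun k => tsum_nonneg fun j => hm_nonneg _
  have hb_shift : ∀ k, b k = m (k + 1) + b (k + 1) := by
    intro k
    have h := Summable.sum_add_tsum_nat_add (f := fun j => m (j + (k + 1))) 1 (hsm' (k + 1))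
    simp only [Finset.sum_range_one] at h
    rw [hb_def]
    simp only [zero_add] at h ⊢
    rw [← h]
    exact congrArg _ (tsum_congr fun j => by congr 1; omega)
  have hb0 : m 0 + b 0 = 1 := by
    have h := Summable.sum_add_tsum_nat_add (f := m) 1 hmsum
    simp only [Finset.sum_range_one, hmtot] at h
    rw [hb_def]; simpa using h
  have hb0f : b 0 = f 0 := by linarith
  -- ## sum of b equals γ₂ / 2
  have hofb : ∀ k, ENNReal.ofReal (b k) = ∑' j, ENNReal.ofReal (m (j + k + 1)) := by
    intro k
    rw [hb_def, ENNReal.ofReal_tsum_of_nonneg (fun j => hm_nonneg _) (hsm' (k + 1))]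
    exact tsum_congr fun j => rfl
  set γ2 : ℝ≥0∞ := ∑' j : ℕ, ENNReal.ofReal ((j.descFactorial 2 : ℝ) * f j) with hγ2_def
  have hbsum1 : 2 * ∑' k, ENNReal.ofReal (b k) = γ2 := by
    have h1 : ∑' k, ENNReal.ofReal (b k) = ∑' n : ℕ, (n : ℝ≥0∞) * ENNReal.ofReal (m n) := by
      simp_rw [hofb]
      have h := takacs_tsum_tail (fun _ => 1) (fun n => ENNReal.ofReal (m n))
      simpa using h
    have h2 : ∑' n : ℕ, (n : ℝ≥0∞) * ENNReal.ofReal (m n)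
        = ∑' n : ℕ, (∑ i ∈ Finset.range n, (i : ℝ≥0∞)) * F1 n := by
      simp_rw [hofm]
      exact takacs_tsum_tail (fun k => (k : ℝ≥0∞)) F1
    have h3 : γ2 = ∑' n : ℕ, ((n.descFactorial 2 : ℕ) : ℝ≥0∞) * F1 n := by
      rw [hγ2_def]
      congr 1; funext n
      rw [ENNReal.ofReal_mul (by positivity), ENNReal.ofReal_natCast]
    rw [h1, h2, h3, ← ENNReal.tsum_mul_left]
    congr 1; funext n
    rw [← mul_assoc]
    congr 1
    have : (n.descFactorial 2 : ℕ) = 2 * ∑ i ∈ Finset.range n, i := by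
      rw [Nat.descFactorial_succ, Nat.descFactorial_one, mul_comm,
        ← Finset.sum_range_id_mul_two n]
      ring
    rw [this]
    push_cast
    ring
  have hbfin : ∑' k, ENNReal.ofReal (b k) ≠ ⊤ := by
    intro h
    rw [h, ENNReal.mul_top (by norm_num)] at hbsum1
    rw [← hbsum1] at hγ2
    exact (lt_irrefl _ hγ2)
  have hbsum : Summable b := by
    have h := ENNReal.summable_toReal hbfin
    refine h.congr fun k => ?_
    exact ENNReal.toReal_ofReal (hb_nonneg k)
  set B : ℝ := ∑' k, b k with hB_def
  have hofB : ENNReal.ofReal B = ∑' k, ENNReal.ofReal (b k) :=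
    ENNReal.ofReal_tsum_of_nonneg hb_nonneg hbsum
  have hBpos : 0 < B := by
    have h := Summable.le_tsum hbsum 0 (fun j _ => hb_nonneg j)
    rw [hb0f] at h
    linarith
  have hγ2B : γ2.toReal = 2 * B := by
    rw [← hbsum1, hofB.symm]
    rw [ENNReal.toReal_mul, ENNReal.toReal_ofReal hBpos.le]
    norm_num
  -- ## partial sums and key identities
  set Fp : ℕ → ℝ := fun n => ∑ i ∈ Finset.range (n + 1), f i with hFp_def
  set S : ℕ → ℝ := fun n => ∑ k ∈ Finset.range (n + 1), m k * Q (n - k) with hS_def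
  have hSdec : ∀ n, S (n + 1)
      = (∑ k ∈ Finset.range (n + 1), m (k + 1) * Q (n - k)) + m 0 * Q (n + 1) := by
    intro n
    show ∑ k ∈ Finset.range (n + 1 + 1), m k * Q (n + 1 - k) = _
    rw [Finset.sum_range_succ' (fun k => m k * Q (n + 1 - k)) (n + 1)]
    congr 1
    apply Finset.sum_congr rfl
    intro k hk
    congr 2
    omega
  have hrec' : ∀ n, Q n = f 0 * Q (n + 1) + ∑ k ∈ Finset.range n, f (k + 1) * Q (n - k) := by
    intro n
    rw [hrec n, Finset.sum_range_succ' (fun i => f i * Q (n - i + 1)) n, add_comm]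
    congr 1
    apply Finset.sum_congr rfl
    intro k hk
    simp only [Finset.mem_range] at hk
    congr 2
    omega
  have claim3 : ∀ n, Q n = S n + Q 0 * Fp n := by
    intro n
    induction n with
    | zero =>
      show Q 0 = (∑ k ∈ Finset.range (0 + 1), m k * Q (0 - k)) + Q 0 * ∑ i ∈ Finset.range (0 + 1), f i
      simp only [zero_add, Finset.range_one, Finset.sum_singleton, Nat.sub_zero]
      nlinarith [hm0]
    | succ n ih =>
      have h2 : ∑ k ∈ Finset.range (n + 1), m (k + 1) * Q (n - k)
          = S n - ∑ k ∈ Finset.range (n + 1), f (k + 1) * Q (n - k) := by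
        rw [hS_def, ← Finset.sum_sub_distrib]
        apply Finset.sum_congr rfl
        intro k hk
        rw [hm_shift k]
        ring
      have h3 : ∑ k ∈ Finset.range (n + 1), f (k + 1) * Q (n - k)
          = (∑ k ∈ Finset.range n, f (k + 1) * Q (n - k)) + f (n + 1) * Q 0 := by
        rw [Finset.sum_range_succ, Nat.sub_self]
      have h4 := hrec' n
      have h5 : Fp (n + 1) = Fp n + f (n + 1) := Finset.sum_range_succ f (n + 1)
      have hmQ : m 0 * Q (n + 1) = Q (n + 1) - f 0 * Q (n + 1) := by
        have h : m 0 = 1 - f 0 := by linarith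
        rw [h]; ring
      rw [hSdec n, h2, h3, h5]
      linarith
  -- ## W and claimM
  set W : ℕ → ℝ := fun n => ∑ k ∈ Finset.range (n + 1), b k * Q (n - k) with hW_def
  set Gp : ℕ → ℝ := fun n => ∑ i ∈ Finset.range (n + 1), Fp i with hGp_def
  have hWdec : ∀ n, W (n + 1)
      = (∑ k ∈ Finset.range (n + 1), b (k + 1) * Q (n - k)) + b 0 * Q (n + 1) := by
    intro n
    show ∑ k ∈ Finset.range (n + 1 + 1), b k * Q (n + 1 - k) = _
    rw [Finset.sum_range_succ' (fun k => b k * Q (n + 1 - k)) (n + 1)]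
    congr 1
    apply Finset.sum_congr rfl
    intro k hk
    congr 2
    omega
  have hFp0 : Fp 0 = f 0 := by show (∑ i ∈ Finset.range (0 + 1), f i) = f 0; simp
  have claimM : ∀ n, W n = Q 0 * Gp n := by
    intro n
    induction n with
    | zero =>
      show (∑ k ∈ Finset.range (0 + 1), b k * Q (0 - k)) = Q 0 * ∑ i ∈ Finset.range (0 + 1), Fp i
      simp only [zero_add, Finset.range_one, Finset.sum_singleton, Nat.sub_zero]
      rw [hb0f, hFp0]; ring
    | succ n ih =>
      have h2 : ∑ k ∈ Finset.range (n + 1), b (k + 1) * Q (n - k)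
          = W n - ∑ k ∈ Finset.range (n + 1), m (k + 1) * Q (n - k) := by
        rw [hW_def, ← Finset.sum_sub_distrib]
        apply Finset.sum_congr rfl
        intro k hk
        rw [hb_shift k]; ring
      have h3 : Q 0 * Fp (n + 1) = Q (n + 1) - S (n + 1) := by linarith [claim3 (n + 1)]
      have h4 : Gp (n + 1) = Gp n + Fp (n + 1) := Finset.sum_range_succ Fp (n + 1)
      have h5 : b 0 * Q (n + 1) + m 0 * Q (n + 1) = Q (n + 1) := by
        have h : b 0 = 1 - m 0 := by linarith
        rw [h]; ring
      have h6 := hSdec n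
      rw [hWdec n, h2, h4]
      linarith
  -- ## increments v
  set v : ℕ → ℝ := fun n => Q n - (if n = 0 then 0 else Q (n - 1)) with hv_def
  have hv0 : v 0 = Q 0 := by simp [hv_def]
  have hvs : ∀ n, v (n + 1) = Q (n + 1) - Q n := by intro n; simp [hv_def]
  have htel : ∀ (c : ℕ → ℝ) (n : ℕ),
      ∑ k ∈ Finset.range (n + 2), c k * v (n + 1 - k)
      = (∑ k ∈ Finset.range (n + 2), c k * Q (n + 1 - k))
        - ∑ k ∈ Finset.range (n + 1), c k * Q (n - k) := by
    intro c n
    have h1 : ∀ k ∈ Finset.range (n + 2), c k * v (n + 1 - k)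
        = c k * Q (n + 1 - k) - (if k ≤ n then c k * Q (n - k) else 0) := by
      intro k hk
      simp only [Finset.mem_range] at hk
      by_cases hkn : k ≤ n
      · rw [if_pos hkn]
        have he : n + 1 - k = (n - k) + 1 := by omega
        rw [he, hvs (n - k)]
        have he2 : n - k + 1 = n + 1 - k := by omega
        rw [he2]
        ring
      · have hk1 : k = n + 1 := by omega
        subst hk1
        rw [if_neg hkn, Nat.sub_self, hv0]
        ring
    rw [Finset.sum_congr rfl h1, Finset.sum_sub_distrib]
    congr 1
    rw [Finset.sum_range_succ, if_neg (by omega)]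
    rw [Finset.sum_congr rfl (fun k hk => if_pos (by simp at hk; omega))]
    rw [add_zero]
  have hveq : ∀ n, f 0 * v (n + 1)
      = (∑ k ∈ Finset.range (n + 1), m (k + 1) * v (n - k)) + Q 0 * f (n + 1) := by
    intro n
    have h1 := htel m n
    have h2 : ∑ k ∈ Finset.range (n + 2), m k * v (n + 1 - k)
        = (∑ k ∈ Finset.range (n + 1), m (k + 1) * v (n - k)) + m 0 * v (n + 1) := by
      rw [Finset.sum_range_succ' (fun k => m k * v (n + 1 - k)) (n + 1)]
      congr 1
      apply Finset.sum_congr rfl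
      intro k hk
      congr 2
      omega
    have h5 : S (n + 1) = ∑ k ∈ Finset.range (n + 2), m k * Q (n + 1 - k) := rfl
    have h6 : S n = ∑ k ∈ Finset.range (n + 1), m k * Q (n - k) := rfl
    have c1 := claim3 (n + 1)
    have c2 := claim3 n
    have c3 : Fp (n + 1) = Fp n + f (n + 1) := Finset.sum_range_succ f (n + 1)
    have c1' : Q (n + 1) = S (n + 1) + Q 0 * Fp n + Q 0 * f (n + 1) := by
      rw [c1, c3]; ring
    have c4 := hvs n
    have h3 : S (n + 1) - S n = v (n + 1) - Q 0 * f (n + 1) := by linarith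
    have h7 : (∑ k ∈ Finset.range (n + 1), m (k + 1) * v (n - k)) + m 0 * v (n + 1)
        = v (n + 1) - Q 0 * f (n + 1) := by
      rw [← h2, h1, ← h5, ← h6]; exact h3
    have hm0' : m 0 = 1 - f 0 := by linarith
    rw [hm0'] at h7
    have h8 : (1 - f 0) * v (n + 1) = v (n + 1) - f 0 * v (n + 1) := by ring
    linarith
  have hv_nonneg : ∀ n, 0 ≤ v n := by
    intro n
    induction n using Nat.strong_induction_on with
    | _ n ih =>
      match n with
      | 0 => rw [hv0]; exact hQ0.le
      | Nat.succ n =>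
        have h := hveq n
        have hsum : 0 ≤ ∑ k ∈ Finset.range (n + 1), m (k + 1) * v (n - k) :=
          Finset.sum_nonneg fun k hk => mul_nonneg (hm_nonneg _) (ih (n - k) (by omega))
        nlinarith [mul_nonneg hQ0.le (hf (n + 1))]
  have hQmono : Monotone Q := monotone_nat_of_le_succ fun n => by
    have h := hv_nonneg (n + 1); rw [hvs n] at h; linarith
  have hQpos : ∀ n, 0 < Q n := fun n => lt_of_lt_of_le hQ0 (hQmono (Nat.zero_le n))
  have hstar : ∀ n, ∑ k ∈ Finset.range (n + 1), b k * v (n - k) = Q 0 * Fp n := by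
    intro n
    match n with
    | 0 =>
      rw [Finset.sum_range_one, hb0f, hFp0]
      show f 0 * v 0 = Q 0 * f 0
      rw [hv0]; ring
    | Nat.succ n =>
      have h1 := htel b n
      have h5 : W (n + 1) = ∑ k ∈ Finset.range (n + 2), b k * Q (n + 1 - k) := rfl
      have h6 : W n = ∑ k ∈ Finset.range (n + 1), b k * Q (n - k) := rfl
      have h4 : Gp (n + 1) = Gp n + Fp (n + 1) := Finset.sum_range_succ Fp (n + 1)
      show ∑ k ∈ Finset.range (n + 2), b k * v (n + 1 - k) = Q 0 * Fp (n + 1)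
      rw [h1, ← h5, ← h6, claimM (n + 1), claimM n, h4]
      ring
  have hFple : ∀ n, Fp n ≤ 1 := by
    intro n
    rw [← hfsum]
    exact Summable.sum_le_tsum _ (fun i _ => hf i) hsf
  have hC : ∀ n, v n ≤ Q 0 / f 0 := by
    intro n
    have h1 : b 0 * v (n - 0) ≤ ∑ k ∈ Finset.range (n + 1), b k * v (n - k) :=
      Finset.single_le_sum (f := fun k => b k * v (n - k))
        (fun k hk => mul_nonneg (hb_nonneg k) (hv_nonneg _))
        (Finset.mem_range.mpr (by omega))
    rw [Nat.sub_zero, hb0f, hstar n] at h1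
    have h4 : Q 0 * Fp n ≤ Q 0 := by nlinarith [hFple n, hQ0]
    rw [le_div_iff₀ hf0]
    nlinarith
  have hstep : ∀ a k : ℕ, Q (a + k) - Q a ≤ (k : ℝ) * (Q 0 / f 0) := by
    intro a k
    induction k with
    | zero => simp
    | succ k ih =>
      have h := hC (a + k + 1)
      rw [hvs (a + k)] at h
      push_cast
      have : a + (k + 1) = a + k + 1 := by omega
      rw [this]
      linarith
  -- ## analysis
  set C : ℝ := Q 0 / f 0 with hC_def
  have hCpos : 0 < C := div_pos hQ0 hf0
  have hlow : ∀ N, Q 0 * Gp N ≤ B * Q N := by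
    intro N
    rw [← claimM N]
    have h1 : W N ≤ (∑ k ∈ Finset.range (N + 1), b k) * Q N := by
      show ∑ k ∈ Finset.range (N + 1), b k * Q (N - k) ≤ _
      rw [Finset.sum_mul]
      exact Finset.sum_le_sum fun k hk =>
        mul_le_mul_of_nonneg_left (hQmono (Nat.sub_le N k)) (hb_nonneg k)
    have h2 : (∑ k ∈ Finset.range (N + 1), b k) ≤ B :=
      Summable.sum_le_tsum _ (fun i _ => hb_nonneg i) hbsum
    calc W N ≤ _ := h1
      _ ≤ B * Q N := mul_le_mul_of_nonneg_right h2 (hQpos N).le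
  have hhigh : ∀ K N : ℕ, K ≤ N →
      (∑ k ∈ Finset.range (K + 1), b k) * (Q N - (K : ℝ) * C) ≤ Q 0 * Gp N := by
    intro K N hKN
    rw [← claimM N]
    have h1 : ∀ k ∈ Finset.range (K + 1), b k * (Q N - (K : ℝ) * C) ≤ b k * Q (N - k) := by
      intro k hk
      simp only [Finset.mem_range] at hk
      apply mul_le_mul_of_nonneg_left _ (hb_nonneg k)
      have h2 := hstep (N - k) k
      have h3 : N - k + k = N := by omega
      rw [h3] at h2
      have h4 : (k : ℝ) * C ≤ (K : ℝ) * C := by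
        apply mul_le_mul_of_nonneg_right _ hCpos.le
        exact_mod_cast Nat.cast_le.mpr (by omega)
      linarith
    calc (∑ k ∈ Finset.range (K + 1), b k) * (Q N - (K : ℝ) * C)
        = ∑ k ∈ Finset.range (K + 1), b k * (Q N - (K : ℝ) * C) := by rw [Finset.sum_mul]
      _ ≤ ∑ k ∈ Finset.range (K + 1), b k * Q (N - k) := Finset.sum_le_sum h1
      _ ≤ ∑ k ∈ Finset.range (N + 1), b k * Q (N - k) := by
          apply Finset.sum_le_sum_of_subset_of_nonneg
          · exact Finset.range_subset_range.mpr (by omega)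
          · intro k _ _
            exact mul_nonneg (hb_nonneg k) (hQpos _).le
      _ = W N := rfl
  have hFlim : Tendsto Fp atTop (𝓝 1) := by
    have h := hsf.hasSum.tendsto_sum_nat
    rw [hfsum] at h
    exact h.comp (tendsto_add_atTop_nat 1)
  have hGlim : Tendsto (fun N : ℕ => Q 0 * Gp N / N) atTop (𝓝 (Q 0)) := by
    have h1 : Tendsto (fun n : ℕ => (n : ℝ)⁻¹ * ∑ i ∈ Finset.range n, Fp i) atTop (𝓝 1) :=
      hFlim.cesaro
    have h2 : Tendsto (fun N : ℕ => (((N + 1 : ℕ) : ℝ))⁻¹ * Gp N) atTop (𝓝 1) :=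
      h1.comp (tendsto_add_atTop_nat 1)
    have h4 : Tendsto (fun N : ℕ => 1 + (N : ℝ)⁻¹) atTop (𝓝 (1 + 0)) :=
      tendsto_const_nhds.add tendsto_inv_atTop_nhds_zero_nat
    have h5 := (h2.const_mul (Q 0)).mul h4
    have h6 : Q 0 * 1 * (1 + 0) = Q 0 := by ring
    rw [h6] at h5
    refine Tendsto.congr' ?_ h5
    filter_upwards [eventually_ge_atTop 1] with N hN
    have hN0 : (N : ℝ) ≠ 0 := by
      have : (0 : ℝ) < N := by exact_mod_cast hN
      linarith
    push_cast
    field_simp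
  have hBK : Tendsto (fun K : ℕ => ∑ k ∈ Finset.range (K + 1), b k) atTop (𝓝 B) := by
    have h := hbsum.hasSum.tendsto_sum_nat
    exact h.comp (tendsto_add_atTop_nat 1)
  have hBKpos : ∀ K, 0 < ∑ k ∈ Finset.range (K + 1), b k := by
    intro K
    have h1 : b 0 ≤ ∑ k ∈ Finset.range (K + 1), b k :=
      Finset.single_le_sum (fun k _ => hb_nonneg k) (Finset.mem_range.mpr (by omega))
    rw [hb0f] at h1
    linarith
  have hBne : B ≠ 0 := ne_of_gt hBpos
  have hLeq : 2 * Q 0 / γ2.toReal = Q 0 / B := by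
    rw [hγ2B, mul_div_mul_left (Q 0) B two_ne_zero]
  rw [hLeq]
  refine tendsto_order.2 ⟨?_, ?_⟩
  · intro a ha
    have hlim : Tendsto (fun N : ℕ => Q 0 * Gp N / N / B) atTop (𝓝 (Q 0 / B)) :=
      hGlim.div_const B
    have hev := hlim.eventually (eventually_gt_nhds ha)
    filter_upwards [hev, eventually_ge_atTop 1] with N h1 hN
    refine lt_of_lt_of_le h1 ?_
    have hNpos : (0 : ℝ) < N := by exact_mod_cast hN
    have h2 := hlow N
    rw [div_div, div_le_div_iff₀ (by positivity) hNpos]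
    nlinarith
  · intro c hc
    have hc'1 : Q 0 / B < (Q 0 / B + c) / 2 := by linarith
    have hc'2 : (Q 0 / B + c) / 2 < c := by linarith
    have hQBK : Tendsto (fun K : ℕ => Q 0 / ∑ k ∈ Finset.range (K + 1), b k) atTop
        (𝓝 (Q 0 / B)) := tendsto_const_nhds.div hBK hBne
    obtain ⟨K, hK⟩ := (hQBK.eventually (eventually_lt_nhds hc'1)).exists
    set BK : ℝ := ∑ k ∈ Finset.range (K + 1), b k with hBK_def
    have hBKp := hBKpos K
    have hlim2 : Tendsto (fun N : ℕ => Q 0 * Gp N / N / BK + (K : ℝ) * C * (N : ℝ)⁻¹)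
        atTop (𝓝 (Q 0 / BK + (K : ℝ) * C * 0)) :=
      (hGlim.div_const BK).add ((tendsto_inv_atTop_nhds_zero_nat (𝕜 := ℝ)).const_mul ((K : ℝ) * C))
    have hlt : Q 0 / BK + (K : ℝ) * C * 0 < c := by
      rw [mul_zero, add_zero]
      exact lt_trans hK hc'2
    have hev2 := hlim2.eventually (eventually_lt_nhds hlt)
    filter_upwards [hev2, eventually_ge_atTop (max K 1)] with N h1 hN
    refine lt_of_le_of_lt ?_ h1
    have hKN : K ≤ N := le_trans (le_max_left _ _) hN
    have hN1 : 1 ≤ N := le_trans (le_max_right _ _) hN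
    have hNpos : (0 : ℝ) < N := by exact_mod_cast hN1
    have h2 := hhigh K N hKN
    have h3 : Q N ≤ Q 0 * Gp N / BK + (K : ℝ) * C := by
      rw [← sub_le_iff_le_add, le_div_iff₀ hBKp, mul_comm]
      exact h2
    calc Q N / N ≤ (Q 0 * Gp N / BK + (K : ℝ) * C) / N := by
          exact (div_le_div_iff_of_pos_right hNpos).mpr h3
      _ = Q 0 * Gp N / N / BK + (K : ℝ) * C * (N : ℝ)⁻¹ := by
          field_simp
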